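/- Consider a reversible reaction graph on c vertices (finite edge set E, maps t, h : E → Fin c with t e ≠ h e, positive constants k⁺, k⁻ : E → ℝ, Laplacian L and incidence matrix D̄ as below). Let ρ : Fin c → ℝ be strictly positive and suppose k⁺ e * ρ (t e) = k⁻ e * ρ (h e) for every edge e. Then L * Matrix.diagonal ρ = D̄ * Matrix.diagonal (fun e => k⁺ e * ρ (t e)) * D̄ᵀ. (The balanced Laplacian of a detailed-balanced network factors as D̄ 𝒦 D̄ᵀ with positive diagonal conductance matrix 𝒦.) -/
import Mathlib


open Matrix

/-- The weighted Laplacian matrix of a reversible reaction graph on `c` vertices,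
with edge set `E`, tail and head maps `t, h`, and forward and reverse reaction
constants `kp, km`. -/
def reactionLaplacian (c : ℕ) {E : Type*} [Fintype E]
    (t h : E → Fin c) (kp km : E → ℝ) : Matrix (Fin c) (Fin c) ℝ :=
  fun i j =>
    if i = j then
      (∑ e ∈ Finset.univ.filter (fun e => t e = j), kp e) +
        (∑ e ∈ Finset.univ.filter (fun e => h e = j), km e)
    else
      -((∑ e ∈ Finset.univ.filter (fun e => t e = j ∧ h e = i), kp e) +
        (∑ e ∈ Finset.univ.filter (fun e => t e = i ∧ h e = j), km e))

/-- The incidence matrix of a reversible reaction graph: entry `1` at the head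
of each edge, `-1` at its tail, `0` elsewhere. -/
def incidenceMatrix (c : ℕ) {E : Type*} [Fintype E]
    (t h : E → Fin c) : Matrix (Fin c) E ℝ :=
  fun i e => if i = h e then 1 else if i = t e then -1 else 0

theorem balanced_laplacian_factorization
    (c : ℕ) (hc : 0 < c) (E : Type*) [Fintype E] [DecidableEq E]
    (t h : E → Fin c) (hth : ∀ e, t e ≠ h e)
    (kp km : E → ℝ) (hkp : ∀ e, 0 < kp e) (hkm : ∀ e, 0 < km e)
    (ρ : Fin c → ℝ) (hρ : ∀ i, 0 < ρ i)
    (hdb : ∀ e, kp e * ρ (t e) = km e * ρ (h e)) :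
    reactionLaplacian c t h kp km * Matrix.diagonal ρ =
      incidenceMatrix c t h * Matrix.diagonal (fun e => kp e * ρ (t e)) *
        (incidenceMatrix c t h)ᵀ := by
  ext i j
  rw [Matrix.mul_diagonal, Matrix.mul_apply]
  simp only [Matrix.mul_diagonal, Matrix.transpose_apply, reactionLaplacian, incidenceMatrix]
  by_cases hij : i = j
  · subst hij
    simp only [if_pos rfl, if_true]
    rw [add_mul, Finset.sum_mul, Finset.sum_mul, Finset.sum_filter, Finset.sum_filter,
      ← Finset.sum_add_distrib]
    refine Finset.sum_congr rfl fun e _ => ?_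
    by_cases h1 : i = h e
    · have h2 : ¬ t e = i := fun hh => hth e (hh.trans h1)
      simp only [if_pos h1, if_neg h2, if_pos h1.symm]
      rw [hdb e, ← h1]
      ring
    · by_cases h2 : i = t e
      · simp only [if_neg h1, if_pos h2.symm, if_pos h2, if_neg (fun hh : h e = i => h1 hh.symm)]
        rw [← h2]
        ring
      · simp only [if_neg h1, if_neg h2, if_neg (fun hh : t e = i => h2 hh.symm),
          if_neg (fun hh : h e = i => h1 hh.symm)]
        ring
  · simp only [if_neg hij]
    rw [neg_add, add_mul, neg_mul, neg_mul, Finset.sum_mul, Finset.sum_mul,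
      Finset.sum_filter, Finset.sum_filter, ← Finset.sum_neg_distrib, ← Finset.sum_neg_distrib,
      ← Finset.sum_add_distrib]
    refine Finset.sum_congr rfl fun e _ => ?_
    by_cases h1 : i = h e
    · have hjh : ¬ j = h e := fun hh => hij (hh.symm ▸ h1)
      by_cases h2 : j = t e
      · simp only [if_pos h1, if_neg hjh, if_pos h2,
          if_pos (And.intro h2.symm h1.symm)]
        have : ¬ (t e = i ∧ h e = j) := fun ⟨ha, _⟩ => hth e (ha.trans h1)
        simp only [if_neg this]
        rw [h2]
        ring
      · have : ¬ (t e = j ∧ h e = i) := fun ⟨ha, _⟩ => h2 ha.symm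
        have this2 : ¬ (t e = i ∧ h e = j) := fun ⟨_, hb⟩ => hjh hb.symm
        simp only [if_pos h1, if_neg hjh, if_neg h2, if_neg this, if_neg this2]
        ring
    · by_cases h2 : i = t e
      · by_cases h3 : j = h e
        · have hjt : ¬ j = t e := fun hh => hij (h2.trans hh.symm)
          have : ¬ (t e = j ∧ h e = i) := fun ⟨ha, _⟩ => hjt ha.symm
          simp only [if_neg h1, if_pos h2, if_pos h3, if_neg this,
            if_pos (And.intro h2.symm h3.symm)]
          rw [h3, hdb e]
          ring
        · have : ¬ (t e = j ∧ h e = i) := fun ⟨_, hb⟩ => h1 hb.symm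
          have this2 : ¬ (t e = i ∧ h e = j) := fun ⟨_, hb⟩ => h3 hb.symm
          simp only [if_neg h1, if_pos h2, if_neg h3, if_neg this, if_neg this2]
          by_cases h4 : j = t e
          · exact absurd (h2.trans h4.symm) hij
          · simp only [if_neg h4]; ring
      · have : ¬ (t e = j ∧ h e = i) := fun ⟨_, hb⟩ => h1 hb.symm
        have this2 : ¬ (t e = i ∧ h e = j) := fun ⟨ha, _⟩ => h2 ha.symm
        simp only [if_neg h1, if_neg h2, if_neg this, if_neg this2]
        ring
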